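/- Let n = 2k+1 with k ≥ 1 and let X be an n×n complex cross matrix. For each i with 0 ≤ i < k, let Y_i be the n×n matrix that agrees with the identity matrix except that its entries in positions (i,i), (i,n-1-i), (n-1-i,i), (n-1-i,n-1-i) equal the corresponding entries of X, and let D be the diagonal matrix that agrees with the identity except that its (k,k) entry equals X k k. Then X = Y_0 · Y_1 · ⋯ · Y_{k-1} · D. -/
import Mathlib


/-- An `n × n` complex matrix is a *cross matrix* if its nonzero entries lie
only on the main diagonal and the anti-diagonal (0-based indices). -/
def IsCrossMatrix {n : ℕ} (X : Matrix (Fin n) (Fin n) ℂ) : Prop :=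
  ∀ i j : Fin n, j ≠ i → (i : ℕ) + (j : ℕ) + 1 ≠ n → X i j = 0

/-- For `n = 2k + 1`, a cross matrix factors as
`X = Y₀ ⬝ Y₁ ⬝ ⋯ ⬝ Y_{k-1} ⬝ D`, where `Yᵢ` agrees with the identity except at
the four positions `(i,i)`, `(i,n-1-i)`, `(n-1-i,i)`, `(n-1-i,n-1-i)`, where it
agrees with `X`, and `D` agrees with the identity except that `D k k = X k k`. -/
theorem crossMatrix_factorization_odd (k : ℕ) (hk : 1 ≤ k)
    (X : Matrix (Fin (2 * k + 1)) (Fin (2 * k + 1)) ℂ) (hX : IsCrossMatrix X)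
    (Y : ℕ → Matrix (Fin (2 * k + 1)) (Fin (2 * k + 1)) ℂ)
    (hY : ∀ i < k, ∀ a b : Fin (2 * k + 1),
      Y i a b =
        if ((a : ℕ) = i ∨ (a : ℕ) = 2 * k + 1 - 1 - i) ∧
            ((b : ℕ) = i ∨ (b : ℕ) = 2 * k + 1 - 1 - i) then
          X a b
        else (1 : Matrix (Fin (2 * k + 1)) (Fin (2 * k + 1)) ℂ) a b)
    (D : Matrix (Fin (2 * k + 1)) (Fin (2 * k + 1)) ℂ)
    (hD : ∀ a b : Fin (2 * k + 1),
      D a b =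
        if (a : ℕ) = k ∧ (b : ℕ) = k then X a b
        else (1 : Matrix (Fin (2 * k + 1)) (Fin (2 * k + 1)) ℂ) a b) :
    X = ((List.range k).map Y).prod * D := by
  have key : ∀ m, m ≤ k → ∀ a b : Fin (2 * k + 1),
      (((List.range m).map Y).prod) a b =
        if (a : ℕ) < m ∨ 2 * k - (a : ℕ) < m then X a b
        else (1 : Matrix (Fin (2 * k + 1)) (Fin (2 * k + 1)) ℂ) a b := by
    intro m
    induction m with
    | zero => intro _ a b; simp
    | succ m ih =>
      intro hm a b
      have ihm := ih (by omega)
      have ha2k : (a : ℕ) ≤ 2 * k := by omega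
      have hb2k : (b : ℕ) ≤ 2 * k := by omega
      rw [List.range_succ, List.map_append, List.prod_append]
      simp only [List.map_cons, List.map_nil, List.prod_cons, List.prod_nil, mul_one]
      rw [Matrix.mul_apply]
      have hYm := hY m (by omega)
      by_cases hdone : (a : ℕ) < m ∨ 2 * k - (a : ℕ) < m
      · -- row `a` already handled
        have hak : (a : ℕ) ≠ k := by omega
        have hcond : (a : ℕ) < m + 1 ∨ 2 * k - (a : ℕ) < m + 1 := by omega
        let a' : Fin (2 * k + 1) := ⟨2 * k - (a : ℕ), by omega⟩
        have ha'v : (a' : ℕ) = 2 * k - (a : ℕ) := rfl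
        have haa' : a ≠ a' := by
          intro h
          have h2 := congrArg Fin.val h
          rw [ha'v] at h2; omega
        rw [Finset.sum_eq_add_of_mem a a' (Finset.mem_univ _) (Finset.mem_univ _) haa'
          (fun c _ hc => by
            rw [ihm, if_pos hdone, hX a c (fun h => hc.1 (h ▸ rfl))
              (by
                have hc2 : (c : ℕ) ≠ 2 * k - (a : ℕ) := fun h =>
                  hc.2 (Fin.ext (h.trans ha'v.symm))
                omega), zero_mul])]
        rw [ihm, ihm, if_pos hdone, if_pos hdone, hYm, hYm]
        have haI : ¬ (((a : ℕ) = m ∨ (a : ℕ) = 2 * k + 1 - 1 - m) ∧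
            ((b : ℕ) = m ∨ (b : ℕ) = 2 * k + 1 - 1 - m)) := by
          rintro ⟨h1, -⟩; omega
        have ha'I : ¬ (((a' : ℕ) = m ∨ (a' : ℕ) = 2 * k + 1 - 1 - m) ∧
            ((b : ℕ) = m ∨ (b : ℕ) = 2 * k + 1 - 1 - m)) := by
          rintro ⟨h1, -⟩; rw [ha'v] at h1; omega
        rw [if_neg haI, if_neg ha'I, if_pos hcond]
        by_cases hba : b = a
        · rw [hba, Matrix.one_apply_eq, Matrix.one_apply_ne (Ne.symm haa'),
            mul_one, mul_zero, add_zero]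
        · by_cases hba' : b = a'
          · rw [hba', Matrix.one_apply_ne haa', Matrix.one_apply_eq,
              mul_zero, zero_add, mul_one]
          · rw [Matrix.one_apply_ne (Ne.symm hba),
              Matrix.one_apply_ne (Ne.symm hba'), mul_zero, mul_zero, add_zero]
            exact (hX a b hba (by
              have h2 : (b : ℕ) ≠ 2 * k - (a : ℕ) := fun h =>
                hba' (Fin.ext (h.trans ha'v.symm))
              omega)).symm
      · -- row `a` not yet handled: partial product row is the identity row
        have hrow : ∀ c, (((List.range m).map Y).prod) a c =
            (1 : Matrix (Fin (2 * k + 1)) (Fin (2 * k + 1)) ℂ) a c := fun c => by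
          rw [ihm, if_neg hdone]
        rw [Finset.sum_eq_single_of_mem a (Finset.mem_univ _)
          (fun c _ hc => by rw [hrow, Matrix.one_apply_ne (Ne.symm hc), zero_mul])]
        rw [hrow, Matrix.one_apply_eq, one_mul, hYm]
        by_cases hnew : (a : ℕ) = m ∨ (a : ℕ) = 2 * k + 1 - 1 - m
        · have hcond : (a : ℕ) < m + 1 ∨ 2 * k - (a : ℕ) < m + 1 := by omega
          by_cases hbI : (b : ℕ) = m ∨ (b : ℕ) = 2 * k + 1 - 1 - m
          · rw [if_pos ⟨hnew, hbI⟩, if_pos hcond]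
          · have hYI : ¬ (((a : ℕ) = m ∨ (a : ℕ) = 2 * k + 1 - 1 - m) ∧
                ((b : ℕ) = m ∨ (b : ℕ) = 2 * k + 1 - 1 - m)) := fun h => hbI h.2
            have hba : b ≠ a := fun h => hbI (by rw [h]; exact hnew)
            rw [if_neg hYI, if_pos hcond,
              hX a b hba (by omega), Matrix.one_apply_ne (Ne.symm hba)]
        · have hYI : ¬ (((a : ℕ) = m ∨ (a : ℕ) = 2 * k + 1 - 1 - m) ∧
              ((b : ℕ) = m ∨ (b : ℕ) = 2 * k + 1 - 1 - m)) := fun h => hnew h.1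
          have hcond : ¬ ((a : ℕ) < m + 1 ∨ 2 * k - (a : ℕ) < m + 1) := by omega
          rw [if_neg hYI, if_neg hcond]
  -- finish: multiply by D
  funext a b
  rw [Matrix.mul_apply]
  have ha2k : (a : ℕ) ≤ 2 * k := by omega
  have hb2k : (b : ℕ) ≤ 2 * k := by omega
  have hDdiag : ∀ c, c ≠ b → D c b = 0 := fun c hc => by
    rw [hD, if_neg (fun h => hc (Fin.ext (h.1.trans h.2.symm))),
      Matrix.one_apply_ne hc]
  rw [Finset.sum_eq_single_of_mem b (Finset.mem_univ _)
    (fun c _ hc => by rw [hDdiag c hc, mul_zero])]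
  rw [key k le_rfl, hD]
  by_cases hak : (a : ℕ) = k
  · have hcond : ¬ ((a : ℕ) < k ∨ 2 * k - (a : ℕ) < k) := by omega
    rw [if_neg hcond]
    by_cases hba : b = a
    · subst hba
      rw [Matrix.one_apply_eq, if_pos ⟨hak, hak⟩, one_mul]
    · rw [Matrix.one_apply_ne (Ne.symm hba), zero_mul]
      have hbv : (b : ℕ) ≠ (a : ℕ) := fun h => hba (Fin.ext h)
      exact hX a b hba (by omega)
  · have hcond : (a : ℕ) < k ∨ 2 * k - (a : ℕ) < k := by omega
    rw [if_pos hcond]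
    by_cases hbk : (b : ℕ) = k
    · have hba : b ≠ a := fun h => hak (by rw [← h]; exact hbk)
      rw [if_pos ⟨hbk, hbk⟩, hX a b hba (by omega), zero_mul]
    · rw [if_neg (fun h => hbk h.1), Matrix.one_apply_eq, mul_one]
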